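/- For every m ≥ 0 the following polynomial identities in p hold: Δ₁(m+1) = (p² + p)·Δ₁(m) + a_{m+1}·Δ₂(m) + a_{m+1}²·Δ₁(m-1); Δ₂(m+1) = (2(p² + p) + 1)·Δ₁(m) + a_{m+1}·Δ₂(m) + a_{m+1}·Δ₃(m); Δ₃(m+1) = -Δ₁(m) - a_{m+1}·Δ₃(m); and Δ₄(m+1) = 2(p² + p)·Δ₁(m) + a_{m+1}·Δ₂(m). -/
import Mathlib


open Polynomial

/-- Numerators of the continued fraction `a_1/(p + a_2/(p + ⋯))`, shifted index:
`nseq a (k+1) = n_k`, with `n_{-1} = 1`, `n_0 = 0`, and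
`n_k = p·n_{k-1} + a_k·n_{k-2}` for `k ≥ 1`. -/
noncomputable def nseq (a : ℕ → ℝ) : ℕ → Polynomial ℝ
  | 0 => 1
  | 1 => 0
  | (k+2) => X * nseq a (k+1) + C (a (k+1)) * nseq a k

/-- Denominators of the continued fraction `a_1/(p + a_2/(p + ⋯))`, shifted index:
`dseq a (k+1) = d_k`, with `d_{-1} = 0`, `d_0 = 1`, and
`d_k = p·d_{k-1} + a_k·d_{k-2}` for `k ≥ 1`. -/
noncomputable def dseq (a : ℕ → ℝ) : ℕ → Polynomial ℝ
  | 0 => 0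
  | 1 => 1
  | (k+2) => X * dseq a (k+1) + C (a (k+1)) * dseq a k

/-- `u⁺`: the polynomial `u` evaluated at `p + 1`. -/
noncomputable def shiftUp (u : Polynomial ℝ) : Polynomial ℝ := u.comp (X + 1)

/-- `Δ₁(m) = F*∘z·(d_m·d_m⁺) - F∘z·(n_m·d_m⁺ - n_m⁺·d_m)`. -/
noncomputable def delta1 (a : ℕ → ℝ) (Fs F : Polynomial ℝ) (m : ℕ) : Polynomial ℝ :=
  Fs.comp (X^2 + X) * (dseq a (m+1) * shiftUp (dseq a (m+1)))
    - F.comp (X^2 + X) *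
      (nseq a (m+1) * shiftUp (dseq a (m+1)) - shiftUp (nseq a (m+1)) * dseq a (m+1))

/-- `Δ₁(m-1)`, with the convention `Δ₁(-1) = 0`. -/
noncomputable def delta1pred (a : ℕ → ℝ) (Fs F : Polynomial ℝ) : ℕ → Polynomial ℝ
  | 0 => 0
  | (m+1) => delta1 a Fs F m

/-- `Δ₂(m) = F*∘z·(p·d_m·d_{m-1}⁺ + (p+1)·d_m⁺·d_{m-1})
  - F∘z·(p·n_m·d_{m-1}⁺ - (p+1)·n_m⁺·d_{m-1} + (p+1)·n_{m-1}·d_m⁺ - p·n_{m-1}⁺·d_m)`. -/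
noncomputable def delta2 (a : ℕ → ℝ) (Fs F : Polynomial ℝ) (m : ℕ) : Polynomial ℝ :=
  Fs.comp (X^2 + X) *
      (X * dseq a (m+1) * shiftUp (dseq a m) + (X + 1) * shiftUp (dseq a (m+1)) * dseq a m)
    - F.comp (X^2 + X) *
      (X * nseq a (m+1) * shiftUp (dseq a m) - (X + 1) * shiftUp (nseq a (m+1)) * dseq a m
        + (X + 1) * nseq a m * shiftUp (dseq a (m+1)) - X * shiftUp (nseq a m) * dseq a (m+1))

/-- `Δ₃(m) = F*∘z·(d_m·d_{m-1}⁺ - d_m⁺·d_{m-1})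
  - F∘z·(n_m·d_{m-1}⁺ + n_m⁺·d_{m-1} - n_{m-1}⁺·d_m - n_{m-1}·d_m⁺)`. -/
noncomputable def delta3 (a : ℕ → ℝ) (Fs F : Polynomial ℝ) (m : ℕ) : Polynomial ℝ :=
  Fs.comp (X^2 + X) *
      (dseq a (m+1) * shiftUp (dseq a m) - shiftUp (dseq a (m+1)) * dseq a m)
    - F.comp (X^2 + X) *
      (nseq a (m+1) * shiftUp (dseq a m) + shiftUp (nseq a (m+1)) * dseq a m
        - shiftUp (nseq a m) * dseq a (m+1) - nseq a m * shiftUp (dseq a (m+1)))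

/-- `Δ₄(m) = Δ₂(m) + Δ₃(m)`. -/
noncomputable def delta4 (a : ℕ → ℝ) (Fs F : Polynomial ℝ) (m : ℕ) : Polynomial ℝ :=
  delta2 a Fs F m + delta3 a Fs F m


lemma shiftUp_add (u v : Polynomial ℝ) : shiftUp (u + v) = shiftUp u + shiftUp v := by
  simp [shiftUp]

lemma shiftUp_mul (u v : Polynomial ℝ) : shiftUp (u * v) = shiftUp u * shiftUp v := by
  simp [shiftUp]

lemma shiftUp_X : shiftUp (X : Polynomial ℝ) = X + 1 := by simp [shiftUp]

lemma shiftUp_C (c : ℝ) : shiftUp (C c) = C c := by simp [shiftUp]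

lemma shiftUp_zero : shiftUp (0 : Polynomial ℝ) = 0 := by simp [shiftUp]

lemma shiftUp_one : shiftUp (1 : Polynomial ℝ) = 1 := by simp [shiftUp]

/-- The recurrence relations of Lemma 4 (lemma:delta) for the polynomials `Δᵢ`. -/
theorem delta_recurrences (a : ℕ → ℝ) (Fs F : Polynomial ℝ) (m : ℕ) :
    delta1 a Fs F (m+1) =
        (X^2 + X) * delta1 a Fs F m + C (a (m+1)) * delta2 a Fs F m
          + C (a (m+1))^2 * delta1pred a Fs F m ∧
    delta2 a Fs F (m+1) =
        (2 * (X^2 + X) + 1) * delta1 a Fs F m + C (a (m+1)) * delta2 a Fs F m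
          + C (a (m+1)) * delta3 a Fs F m ∧
    delta3 a Fs F (m+1) = - delta1 a Fs F m - C (a (m+1)) * delta3 a Fs F m ∧
    delta4 a Fs F (m+1) = 2 * (X^2 + X) * delta1 a Fs F m + C (a (m+1)) * delta2 a Fs F m := by
  cases m with
  | zero =>
    refine ⟨?_, ?_, ?_, ?_⟩ <;>
      simp only [delta1, delta2, delta3, delta4, delta1pred, nseq, dseq, shiftUp_add,
        shiftUp_mul, shiftUp_X, shiftUp_C, shiftUp_zero, shiftUp_one] <;> ring
  | succ k =>
    refine ⟨?_, ?_, ?_, ?_⟩ <;>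
      simp only [delta1, delta2, delta3, delta4, delta1pred, nseq, dseq, shiftUp_add,
        shiftUp_mul, shiftUp_X, shiftUp_C, shiftUp_zero, shiftUp_one] <;> ring
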